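/- Let $\kk$ be a field of characteristic $2$ and $H = \langle \sigma, \tau \rangle$ the Klein four-group acting as in the paper's example on $\kk[x_1, \ldots, x_m, y_1, \ldots, y_{m+1}]$ with $m \geq 3$ ($\sigma(y_j) = y_j + x_j$, $\tau(y_j) = y_j + x_{j-1}$, $x_j$ fixed, $x_0 = x_m = 0$). Then the stabilizer of $y_2$ in $H$ is trivial, so the orbit $H \cdot y_2$ has $4$ elements and $N^H(y_2) = \prod_{h \in H\cdot y_2} h$ has degree $4$, while there exists an $H$-invariant polynomial monic of degree $2$ in $y_2$; hence $\deg(y_2) = 2 < 4 = \deg N^H(y_2)$. -/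

import Mathlib

/-- The variable `x_j` (for `1 ≤ j ≤ m`) of the paper's Klein four-group example, with the
convention that indices outside the range `1 ≤ j < m` (in particular `x₀` and `x_m`) give `0`. -/
noncomputable def kleinX (k : Type*) [Field k] (m : ℕ) (j : ℕ) :
    MvPolynomial (Fin m ⊕ Fin (m + 1)) k :=
  if h : 1 ≤ j ∧ j < m then MvPolynomial.X (Sum.inl ⟨j - 1, by omega⟩) else 0

/-- The variable `y_j` (for `1 ≤ j ≤ m+1`) of the paper's Klein four-group example. -/
noncomputable def kleinY (k : Type*) [Field k] (m : ℕ) (j : ℕ) :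
    MvPolynomial (Fin m ⊕ Fin (m + 1)) k :=
  if h : 1 ≤ j ∧ j ≤ m + 1 then MvPolynomial.X (Sum.inr ⟨j - 1, by omega⟩) else 0

/-- The action of `σ`: `σ(y_j) = y_j + x_j`, `σ(x_j) = x_j`. -/
noncomputable def kleinSigma (k : Type*) [Field k] (m : ℕ) :
    MvPolynomial (Fin m ⊕ Fin (m + 1)) k →ₐ[k] MvPolynomial (Fin m ⊕ Fin (m + 1)) k :=
  MvPolynomial.aeval (Sum.elim (fun i : Fin m => MvPolynomial.X (Sum.inl i))
    (fun i : Fin (m + 1) => MvPolynomial.X (Sum.inr i) + kleinX k m (i.1 + 1)))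

/-- The action of `τ`: `τ(y_j) = y_j + x_{j-1}`, `τ(x_j) = x_j`. -/
noncomputable def kleinTau (k : Type*) [Field k] (m : ℕ) :
    MvPolynomial (Fin m ⊕ Fin (m + 1)) k →ₐ[k] MvPolynomial (Fin m ⊕ Fin (m + 1)) k :=
  MvPolynomial.aeval (Sum.elim (fun i : Fin m => MvPolynomial.X (Sum.inl i))
    (fun i : Fin (m + 1) => MvPolynomial.X (Sum.inr i) + kleinX k m i.1))

/-- A polynomial `g` is "monic of degree `d` in the variable `v`" if its degree in `v`
is `d`, the only monomial of `g` of `v`-degree `d` is the pure power `v^d`, and that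
monomial has coefficient `1`. -/
def MonicInVarOfDeg {k : Type*} [Field k] {σ : Type*} (v : σ) (d : ℕ)
    (g : MvPolynomial σ k) : Prop :=
  MvPolynomial.degreeOf v g = d ∧
    (∀ mo ∈ g.support, mo v = d → mo = Finsupp.single v d) ∧
    MvPolynomial.coeff (Finsupp.single v d) g = 1

open MvPolynomial in
open scoped Classical in
/-- In the Klein four-group example (char `2`, `m ≥ 3`): the stabilizer of `y₂` in
`H = ⟨σ,τ⟩` is trivial, so its orbit has `4` elements and the orbit product `N^H(y₂)`
has degree `4` in `y₂`, while `deg(y₂)` — the least positive `d` for which some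
`H`-invariant polynomial is monic of degree `d` in `y₂` — equals `2`. -/
theorem klein_four_terminal_variable_degree_lt_norm_degree (k : Type*) [Field k]
    [CharP k 2] (m : ℕ) (hm : 3 ≤ m) :
    kleinSigma k m (kleinY k m 2) ≠ kleinY k m 2 ∧
    kleinTau k m (kleinY k m 2) ≠ kleinY k m 2 ∧
    kleinSigma k m (kleinTau k m (kleinY k m 2)) ≠ kleinY k m 2 ∧
    ({kleinY k m 2, kleinSigma k m (kleinY k m 2), kleinTau k m (kleinY k m 2),
        kleinSigma k m (kleinTau k m (kleinY k m 2))} :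
          Finset (MvPolynomial (Fin m ⊕ Fin (m + 1)) k)).card = 4 ∧
    MvPolynomial.degreeOf (Sum.inr (⟨1, by omega⟩ : Fin (m + 1)))
      (∏ h ∈ ({kleinY k m 2, kleinSigma k m (kleinY k m 2), kleinTau k m (kleinY k m 2),
          kleinSigma k m (kleinTau k m (kleinY k m 2))} :
            Finset (MvPolynomial (Fin m ⊕ Fin (m + 1)) k)), h) = 4 ∧
    sInf {d : ℕ | 0 < d ∧ ∃ g : MvPolynomial (Fin m ⊕ Fin (m + 1)) k,
        kleinSigma k m g = g ∧ kleinTau k m g = g ∧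
        MonicInVarOfDeg (Sum.inr (⟨1, by omega⟩ : Fin (m + 1))) d g} = 2 := by
  classical
  set a1 : Fin m ⊕ Fin (m + 1) := Sum.inl ⟨0, by omega⟩ with ha1
  set a2 : Fin m ⊕ Fin (m + 1) := Sum.inl ⟨1, by omega⟩ with ha2
  set y1 : Fin m ⊕ Fin (m + 1) := Sum.inr ⟨0, by omega⟩ with hy1
  set y2 : Fin m ⊕ Fin (m + 1) := Sum.inr ⟨1, by omega⟩ with hy2
  set y3 : Fin m ⊕ Fin (m + 1) := Sum.inr ⟨2, by omega⟩ with hy3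
  -- basic facts about the kleinX / kleinY values
  have hX0 : kleinX k m 0 = 0 := by unfold kleinX; rw [dif_neg]; omega
  have hX1 : kleinX k m 1 = X a1 := by unfold kleinX; rw [dif_pos ⟨le_refl 1, by omega⟩]
  have hX2 : kleinX k m 2 = X a2 := by unfold kleinX; rw [dif_pos ⟨by omega, by omega⟩]
  have hY2 : kleinY k m 2 = X y2 := by unfold kleinY; rw [dif_pos ⟨by omega, by omega⟩]
  -- action on generators
  have hσx : ∀ i : Fin m, kleinSigma k m (X (Sum.inl i)) = X (Sum.inl i) := by
    intro i; simp [kleinSigma]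
  have hσy : ∀ i : Fin (m + 1),
      kleinSigma k m (X (Sum.inr i)) = X (Sum.inr i) + kleinX k m (i.1 + 1) := by
    intro i; simp [kleinSigma]
  have hτx : ∀ i : Fin m, kleinTau k m (X (Sum.inl i)) = X (Sum.inl i) := by
    intro i; simp [kleinTau]
  have hτy : ∀ i : Fin (m + 1),
      kleinTau k m (X (Sum.inr i)) = X (Sum.inr i) + kleinX k m i.1 := by
    intro i; simp [kleinTau]
  have hσy1 : kleinSigma k m (X y1) = X y1 + X a1 := by
    rw [hy1, hσy]; rw [show ((⟨0, by omega⟩ : Fin (m+1)).1 + 1) = 1 from rfl, hX1]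
  have hσy2 : kleinSigma k m (X y2) = X y2 + X a2 := by
    rw [hy2, hσy]; rw [show ((⟨1, by omega⟩ : Fin (m+1)).1 + 1) = 2 from rfl, hX2]
  have hσy3 : kleinSigma k m (X y3) = X y3 + kleinX k m 3 := by
    rw [hy3, hσy]
  have hτy1 : kleinTau k m (X y1) = X y1 := by
    rw [hy1, hτy]; rw [show ((⟨0, by omega⟩ : Fin (m+1)).1) = 0 from rfl, hX0, add_zero]
  have hτy2 : kleinTau k m (X y2) = X y2 + X a1 := by
    rw [hy2, hτy]; rw [show ((⟨1, by omega⟩ : Fin (m+1)).1) = 1 from rfl, hX1]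
  have hτy3 : kleinTau k m (X y3) = X y3 + X a2 := by
    rw [hy3, hτy]; rw [show ((⟨2, by omega⟩ : Fin (m+1)).1) = 2 from rfl, hX2]
  have hσa1 : kleinSigma k m (X a1) = X a1 := hσx _
  have hσa2 : kleinSigma k m (X a2) = X a2 := hσx _
  have hτa1 : kleinTau k m (X a1) = X a1 := hτx _
  have hτa2 : kleinTau k m (X a2) = X a2 := hτx _
  have hσC3 : kleinSigma k m (kleinX k m 3) = kleinX k m 3 := by
    unfold kleinX; split
    · exact hσx _
    · exact map_zero _
  have hτC3 : kleinTau k m (kleinX k m 3) = kleinX k m 3 := by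
    unfold kleinX; split
    · exact hτx _
    · exact map_zero _
  -- the four orbit elements
  have hE1 : kleinSigma k m (kleinY k m 2) = X y2 + X a2 := by rw [hY2, hσy2]
  have hE2 : kleinTau k m (kleinY k m 2) = X y2 + X a1 := by rw [hY2, hτy2]
  have hE3 : kleinSigma k m (kleinTau k m (kleinY k m 2)) = X y2 + X a2 + X a1 := by
    rw [hE2, map_add, hσy2, hσa1]
  -- distinctness facts
  have h2R : (2 : MvPolynomial (Fin m ⊕ Fin (m + 1)) k) = 0 := by
    exact_mod_cast CharP.cast_eq_zero (MvPolynomial (Fin m ⊕ Fin (m + 1)) k) 2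
  have hA0 : (X a1 : MvPolynomial (Fin m ⊕ Fin (m + 1)) k) ≠ 0 := X_ne_zero _
  have hB0 : (X a2 : MvPolynomial (Fin m ⊕ Fin (m + 1)) k) ≠ 0 := X_ne_zero _
  have hBA : (X a2 : MvPolynomial (Fin m ⊕ Fin (m + 1)) k) ≠ X a1 := by
    intro h
    have := X_injective h
    rw [ha1, ha2] at this
    simp at this
  have hBA0 : (X a2 + X a1 : MvPolynomial (Fin m ⊕ Fin (m + 1)) k) ≠ 0 := by
    intro h
    exact hBA (by rw [CharTwo.add_eq_iff_eq_add.mp h, zero_add])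
  have h12 : (X y2 : MvPolynomial (Fin m ⊕ Fin (m + 1)) k) ≠ X y2 + X a2 :=
    fun h => hB0 (left_eq_add.mp h)
  have h13 : (X y2 : MvPolynomial (Fin m ⊕ Fin (m + 1)) k) ≠ X y2 + X a1 :=
    fun h => hA0 (left_eq_add.mp h)
  have h14 : (X y2 : MvPolynomial (Fin m ⊕ Fin (m + 1)) k) ≠ X y2 + X a2 + X a1 := by
    rw [add_assoc]; exact fun h => hBA0 (left_eq_add.mp h)
  have h23 : (X y2 + X a2 : MvPolynomial (Fin m ⊕ Fin (m + 1)) k) ≠ X y2 + X a1 :=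
    fun h => hBA (add_left_cancel h)
  have h24 : (X y2 + X a2 : MvPolynomial (Fin m ⊕ Fin (m + 1)) k) ≠ X y2 + X a2 + X a1 :=
    fun h => hA0 (left_eq_add.mp h)
  have h34 : (X y2 + X a1 : MvPolynomial (Fin m ⊕ Fin (m + 1)) k) ≠ X y2 + X a2 + X a1 := by
    intro h
    rw [add_assoc] at h
    exact hB0 (right_eq_add.mp (add_left_cancel h))
  -- the degree-2 invariant witness
  set r : MvPolynomial (Fin m ⊕ Fin (m + 1)) k :=
    X a1 * X y2 + X a2 * X y2 + X a2 * X y1 + X a1 * X y3 + X y1 * kleinX k m 3 with hrdef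
  set g : MvPolynomial (Fin m ⊕ Fin (m + 1)) k := X y2 ^ 2 + r with hgdef
  have hgσ : kleinSigma k m g = g := by
    rw [hgdef, hrdef]
    simp only [map_add, map_mul, map_pow, hσy1, hσy2, hσy3, hσa1, hσa2, hσC3]
    linear_combination (X a2 * X y2 + X a2 ^ 2 + X a1 * X a2 + X a1 * kleinX k m 3) * h2R
  have hgτ : kleinTau k m g = g := by
    rw [hgdef, hrdef]
    simp only [map_add, map_mul, map_pow, hτy1, hτy2, hτy3, hτa1, hτa2, hτC3]
    linear_combination (X a1 * X y2 + X a1 ^ 2 + X a1 * X a2) * h2R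
  have hdC3 : degreeOf y2 (kleinX k m 3) = 0 := by
    unfold kleinX; split
    · rw [degreeOf_X, if_neg]; rw [hy2]; simp [Fin.ext_iff]
    · exact degreeOf_zero _
  have hdy2a1 : degreeOf y2 (X a1 : MvPolynomial (Fin m ⊕ Fin (m + 1)) k) = 0 := by
    rw [degreeOf_X, if_neg]; rw [hy2, ha1]; simp [Fin.ext_iff]
  have hdy2a2 : degreeOf y2 (X a2 : MvPolynomial (Fin m ⊕ Fin (m + 1)) k) = 0 := by
    rw [degreeOf_X, if_neg]; rw [hy2, ha2]; simp [Fin.ext_iff]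
  have hdy2y1 : degreeOf y2 (X y1 : MvPolynomial (Fin m ⊕ Fin (m + 1)) k) = 0 := by
    rw [degreeOf_X, if_neg]; rw [hy2, hy1]; simp [Fin.ext_iff]
  have hdy2y3 : degreeOf y2 (X y3 : MvPolynomial (Fin m ⊕ Fin (m + 1)) k) = 0 := by
    rw [degreeOf_X, if_neg]; rw [hy2, hy3]; simp [Fin.ext_iff]
  have hdy2y2 : degreeOf y2 (X y2 : MvPolynomial (Fin m ⊕ Fin (m + 1)) k) = 1 := by
    rw [degreeOf_X, if_pos rfl]
  have hr1 : degreeOf y2 r ≤ 1 := by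
    have t1 : degreeOf y2 (X a1 * X y2 : MvPolynomial (Fin m ⊕ Fin (m + 1)) k) ≤ 1 :=
      (degreeOf_mul_le _ _ _).trans (by rw [hdy2a1, hdy2y2])
    have t2 : degreeOf y2 (X a2 * X y2 : MvPolynomial (Fin m ⊕ Fin (m + 1)) k) ≤ 1 :=
      (degreeOf_mul_le _ _ _).trans (by rw [hdy2a2, hdy2y2])
    have t3 : degreeOf y2 (X a2 * X y1 : MvPolynomial (Fin m ⊕ Fin (m + 1)) k) ≤ 1 :=
      (degreeOf_mul_le _ _ _).trans (by rw [hdy2a2, hdy2y1]; omega)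
    have t4 : degreeOf y2 (X a1 * X y3 : MvPolynomial (Fin m ⊕ Fin (m + 1)) k) ≤ 1 :=
      (degreeOf_mul_le _ _ _).trans (by rw [hdy2a1, hdy2y3]; omega)
    have t5 : degreeOf y2 (X y1 * kleinX k m 3) ≤ 1 :=
      (degreeOf_mul_le _ _ _).trans (by rw [hdy2y1, hdC3]; omega)
    rw [hrdef]
    exact le_trans (degreeOf_add_le _ _ _) (max_le (le_trans (degreeOf_add_le _ _ _)
      (max_le (le_trans (degreeOf_add_le _ _ _) (max_le (le_trans (degreeOf_add_le _ _ _)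
        (max_le t1 t2)) t3)) t4)) t5)
  have hcoeffg : coeff (Finsupp.single y2 2) g = 1 := by
    rw [hgdef, hrdef]
    simp [coeff_add, coeff_X_mul', coeff_X_pow, Finsupp.mem_support_iff, Finsupp.single_apply,
      hy2, hy1, ha1, ha2, Fin.ext_iff]
  have hdg : degreeOf y2 g = 2 := by
    refine le_antisymm ?_ ?_
    · rw [hgdef]
      refine le_trans (degreeOf_add_le _ _ _) (max_le ?_ (hr1.trans one_le_two))
      rw [pow_two]
      exact (degreeOf_mul_le _ _ _).trans (by rw [hdy2y2])
    · by_contra hc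
      push_neg at hc
      have h4 := (degreeOf_lt_iff (by norm_num)).mp hc (Finsupp.single y2 2)
        (mem_support_iff.mpr (by rw [hcoeffg]; exact one_ne_zero))
      simp [Finsupp.single_eq_same] at h4
  have hsupg : ∀ mo ∈ g.support, mo y2 = 2 → mo = Finsupp.single y2 2 := by
    intro mo hmo h2'
    rw [hgdef] at hmo
    rcases Finset.mem_union.mp (support_add hmo) with h | h
    · rw [support_X_pow] at h
      exact Finset.mem_singleton.mp h
    · have := monomial_le_degreeOf y2 h
      omega
  -- exclusion of degree 1
  have hexcl : ∀ g' : MvPolynomial (Fin m ⊕ Fin (m + 1)) k, kleinSigma k m g' = g' →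
      ¬ MonicInVarOfDeg y2 1 g' := by
    intro g' hinv ⟨hd1, hmono, hc1⟩
    set p : Fin m ⊕ Fin (m + 1) → k := fun v => if v = a2 then 1 else 0 with hp
    set F : Fin m ⊕ Fin (m + 1) → MvPolynomial (Fin m ⊕ Fin (m + 1)) k :=
        Sum.elim (fun i : Fin m => X (Sum.inl i))
          (fun i : Fin (m + 1) => X (Sum.inr i) + kleinX k m (i.1 + 1)) with hF
    set q : Fin m ⊕ Fin (m + 1) → k := fun i => aeval p (F i) with hq
    have hcomp : aeval p (kleinSigma k m g') = aeval q g' := by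
      rw [show kleinSigma k m = aeval F from rfl]
      rw [show (aeval p (aeval F g') : k) = ((aeval p).comp (aeval F)) g' from rfl, comp_aeval]
    have hφX : ∀ j : ℕ, j ≠ 2 → aeval p (kleinX k m j) = 0 := by
      intro j hj
      unfold kleinX; split
      next hcond =>
        rw [aeval_X, hp]
        simp only
        rw [if_neg]
        intro hcc
        rw [ha2] at hcc
        have : j - 1 = 1 := by simpa [Fin.mk.injEq] using hcc
        omega
      next => exact map_zero _
    have hq2 : q y2 = 1 := by
      rw [hq, hF, hy2]
      simp only [Sum.elim_inr, map_add, aeval_X]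
      rw [show ((⟨1, by omega⟩ : Fin (m + 1)).1 + 1) = 2 from rfl, hX2, aeval_X, hp]
      simp [hy2, ha2]
    have hp2 : p y2 = 0 := by rw [hp]; simp [hy2, ha2]
    have hqoff : ∀ v, v ≠ y2 → q v = p v := by
      intro v hv
      rcases v with i | i
      · rw [hq, hF]; simp only [Sum.elim_inl, aeval_X]
      · rw [hq, hF]
        simp only [Sum.elim_inr, map_add, aeval_X]
        have : aeval p (kleinX k m (i.1 + 1)) = 0 := by
          apply hφX
          intro hcc
          apply hv
          rw [hy2]
          have : i.1 = 1 := by omega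
          exact congrArg Sum.inr (Fin.ext this)
        rw [this, add_zero]
    -- the sum computation
    have he_mem : Finsupp.single y2 1 ∈ g'.support :=
      mem_support_iff.mpr (by rw [hc1]; exact one_ne_zero)
    have hterm : ∀ mo ∈ g'.support.erase (Finsupp.single y2 1),
        coeff mo g' * ∏ i ∈ mo.support, q i ^ mo i
          = coeff mo g' * ∏ i ∈ mo.support, p i ^ mo i := by
      intro mo hmo
      obtain ⟨hne, hmem⟩ := Finset.mem_erase.mp hmo
      have hle1 : mo y2 ≤ 1 := le_trans (monomial_le_degreeOf y2 hmem) (le_of_eq hd1)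
      have hne1 : mo y2 ≠ 1 := fun h => hne (hmono mo hmem h)
      have h0 : mo y2 = 0 := by omega
      congr 1
      refine Finset.prod_congr rfl fun v hv => ?_
      have hvy : v ≠ y2 := by
        intro h
        rw [h] at hv
        exact (Finsupp.mem_support_iff.mp hv) h0
      rw [hqoff v hvy]
    have hkey : MvPolynomial.eval q g' = MvPolynomial.eval p g' + 1 := by
      rw [eval_eq, eval_eq, ← Finset.add_sum_erase _ _ he_mem, ← Finset.add_sum_erase _ _ he_mem,
        Finset.sum_congr rfl hterm, hc1]
      simp only [Finsupp.support_single_ne_zero _ one_ne_zero, Finset.prod_singleton,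
        Finsupp.single_eq_same, hq2, hp2]
      ring
    have hpq : MvPolynomial.eval q g' = MvPolynomial.eval p g' := by
      have h1 := hcomp
      rw [hinv] at h1
      exact h1.symm
    rw [hkey] at hpq
    exact one_ne_zero (left_eq_add.mp hpq.symm)
  -- now prove the six conjuncts
  rw [hE3, hE2, hE1, hY2]
  refine ⟨fun h => h12 h.symm, fun h => h13 h.symm, fun h => h14 h.symm, ?_, ?_, ?_⟩
  · rw [Finset.card_insert_of_notMem (by
        simp only [Finset.mem_insert, Finset.mem_singleton]; push_neg
        exact ⟨h12, h13, h14⟩),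
      Finset.card_insert_of_notMem (by
        simp only [Finset.mem_insert, Finset.mem_singleton]; push_neg
        exact ⟨h23, h24⟩),
      Finset.card_insert_of_notMem (by simp only [Finset.mem_singleton]; exact h34),
      Finset.card_singleton]
  · rw [Finset.prod_insert (by
        simp only [Finset.mem_insert, Finset.mem_singleton]; push_neg
        exact ⟨h12, h13, h14⟩),
      Finset.prod_insert (by
        simp only [Finset.mem_insert, Finset.mem_singleton]; push_neg
        exact ⟨h23, h24⟩),
      Finset.prod_insert (by simp only [Finset.mem_singleton]; exact h34),
      Finset.prod_singleton]
    show MvPolynomial.degreeOf y2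
      (X y2 * ((X y2 + X a2) * ((X y2 + X a1) * (X y2 + X a2 + X a1)))) = 4
    have hPdec : (X y2 * ((X y2 + X a2) * ((X y2 + X a1) * (X y2 + X a2 + X a1)))
          : MvPolynomial (Fin m ⊕ Fin (m + 1)) k)
        = X y2 ^ 4
          + X a1 * (2 * X y2 ^ 3 + X a1 * X y2 ^ 2 + 3 * X a2 * X y2 ^ 2
              + X a1 * X a2 * X y2 + X a2 ^ 2 * X y2)
          + X a2 * (2 * X y2 ^ 3 + X a2 * X y2 ^ 2) := by ring
    have h1 : coeff (Finsupp.single y2 4)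
        ((X y2 ^ 4
          + X a1 * (2 * X y2 ^ 3 + X a1 * X y2 ^ 2 + 3 * X a2 * X y2 ^ 2
              + X a1 * X a2 * X y2 + X a2 ^ 2 * X y2)
          + X a2 * (2 * X y2 ^ 3 + X a2 * X y2 ^ 2)) : MvPolynomial (Fin m ⊕ Fin (m + 1)) k)
        = 1 := by
      simp [coeff_add, coeff_X_mul', coeff_X_pow, Finsupp.mem_support_iff,
        Finsupp.single_apply, hy2, ha1, ha2, Fin.ext_iff]
    have hcoeffP : coeff (Finsupp.single y2 4)
        ((X y2 * ((X y2 + X a2) * ((X y2 + X a1) * (X y2 + X a2 + X a1))))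
          : MvPolynomial (Fin m ⊕ Fin (m + 1)) k) = 1 :=
      (congrArg (coeff (Finsupp.single y2 4)) hPdec).trans h1
    refine le_antisymm ?_ ?_
    · have hf1 : degreeOf y2 (X y2 + X a2 : MvPolynomial (Fin m ⊕ Fin (m + 1)) k) ≤ 1 :=
        (degreeOf_add_le _ _ _).trans (by rw [hdy2y2, hdy2a2]; omega)
      have hf2 : degreeOf y2 (X y2 + X a1 : MvPolynomial (Fin m ⊕ Fin (m + 1)) k) ≤ 1 :=
        (degreeOf_add_le _ _ _).trans (by rw [hdy2y2, hdy2a1]; omega)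
      have hf3 : degreeOf y2 (X y2 + X a2 + X a1 : MvPolynomial (Fin m ⊕ Fin (m + 1)) k) ≤ 1 :=
        (degreeOf_add_le _ _ _).trans (max_le hf1 (by rw [hdy2a1]; omega))
      refine le_trans (degreeOf_mul_le _ _ _) (le_trans (add_le_add hdy2y2.le
        (le_trans (degreeOf_mul_le _ _ _) (add_le_add hf1
          (le_trans (degreeOf_mul_le _ _ _) (add_le_add hf2 hf3))))) (by norm_num))
    · by_contra hc
      push_neg at hc
      have h4 := (degreeOf_lt_iff (by norm_num)).mp hc (Finsupp.single y2 4)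
        (mem_support_iff.mpr (fun hz => one_ne_zero (hcoeffP.symm.trans hz)))
      simp [Finsupp.single_eq_same] at h4
  · refine le_antisymm (Nat.sInf_le ⟨by norm_num, g, hgσ, hgτ, hdg, hsupg, hcoeffg⟩) ?_
    refine le_csInf ⟨2, by norm_num, g, hgσ, hgτ, hdg, hsupg, hcoeffg⟩ ?_
    rintro d ⟨hdpos, g', hgσ', hgτ', hmon⟩
    by_contra hlt
    push_neg at hlt
    obtain rfl : d = 1 := by omega
    exact hexcl g' hgσ' hmon
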